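/- Let G be a finite group and A a field. Then the dimension of the A-vector space Inn(A[G]) of inner derivations of A[G] equals |G| − |G^G|, the order of G minus the number of conjugacy classes of G. -/

import Mathlib

open MonoidAlgebra

/-- The A-submodule of inner derivations of the group ring `A[G]`, inside the
`A`-module of all `A`-linear endomorphisms of `A[G]`. -/
def innDer (A G : Type) [CommRing A] [Group G] :
    Submodule A (MonoidAlgebra A G →ₗ[A] MonoidAlgebra A G) where
  carrier := {d | ∃ a : MonoidAlgebra A G, ∀ x : MonoidAlgebra A G, d x = a * x - x * a}
  add_mem' := by
    rintro d e ⟨a, ha⟩ ⟨b, hb⟩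
    refine ⟨a + b, fun x => ?_⟩
    simp only [LinearMap.add_apply, ha x, hb x, add_mul, mul_add]
    abel
  zero_mem' := ⟨0, fun x => by simp⟩
  smul_mem' := by
    rintro c d ⟨a, ha⟩
    refine ⟨c • a, fun x => ?_⟩
    simp only [LinearMap.smul_apply, ha x, smul_sub, smul_mul_assoc, mul_smul_comm]

/-- The adjoint map a ↦ (x ↦ a*x - x*a). -/
noncomputable def adMap (A G : Type) [CommRing A] [Group G] :
    MonoidAlgebra A G →ₗ[A] (MonoidAlgebra A G →ₗ[A] MonoidAlgebra A G) where
  toFun a := LinearMap.mulLeft A a - LinearMap.mulRight A a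
  map_add' a b := by
    apply LinearMap.ext; intro x
    simp only [LinearMap.sub_apply, LinearMap.mulLeft_apply, LinearMap.mulRight_apply,
      LinearMap.add_apply, add_mul, mul_add]
    abel
  map_smul' c a := by
    apply LinearMap.ext; intro x
    simp [smul_sub, smul_mul_assoc, mul_smul_comm]

theorem adMap_apply (A G : Type) [CommRing A] [Group G] (a x : MonoidAlgebra A G) :
    adMap A G a x = a * x - x * a := rfl

theorem innDer_eq_range (A G : Type) [CommRing A] [Group G] :
    innDer A G = LinearMap.range (adMap A G) := by
  ext d
  constructor
  · rintro ⟨a, ha⟩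
    exact ⟨a, by apply LinearMap.ext; intro x; rw [adMap_apply, ha x]⟩
  · rintro ⟨a, rfl⟩
    exact ⟨a, fun x => rfl⟩

theorem mem_ker_adMap_iff (A G : Type) [CommRing A] [Group G] (a : MonoidAlgebra A G) :
    a ∈ LinearMap.ker (adMap A G) ↔ ∀ g h : G, a.coeff (g * h * g⁻¹) = a.coeff h := by
  constructor
  · intro ha g h
    have h1 : a * single g 1 - single g 1 * a = 0 :=
      LinearMap.congr_fun (LinearMap.mem_ker.mp ha) (single g 1)
    rw [sub_eq_zero] at h1
    have h2 : (a * single g 1 : MonoidAlgebra A G).coeff (g * h)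
        = (single g 1 * a : MonoidAlgebra A G).coeff (g * h) := by rw [h1]
    simp only [mul_single_apply, single_mul_apply, mul_one, one_mul,
      inv_mul_cancel_left] at h2
    exact h2
  · intro H
    rw [LinearMap.mem_ker]
    apply LinearMap.ext; intro x
    show a * x - x * a = 0
    rw [sub_eq_zero]
    apply MonoidAlgebra.ext; apply Finsupp.ext; intro g
    rw [mul_apply_right, mul_apply_left]
    refine Finsupp.sum_congr fun h _ => ?_
    have : a.coeff (g * h⁻¹) = a.coeff (h⁻¹ * g) := by
      have h4 := H h⁻¹ (g * h⁻¹)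
      rw [show h⁻¹ * (g * h⁻¹) * h⁻¹⁻¹ = h⁻¹ * g by group] at h4
      exact h4.symm
    rw [this]
    ring

theorem finrank_ker_adMap (A G : Type) [Field A] [Group G] [Finite G] :
    Module.finrank A ↥(LinearMap.ker (adMap A G)) = Nat.card (ConjClasses G) := by
  cases nonempty_fintype G
  have hmkout : ∀ c : ConjClasses G, ConjClasses.mk c.out = c := fun c => Quotient.out_eq c
  have e : ↥(LinearMap.ker (adMap A G)) ≃ₗ[A] (ConjClasses G → A) := by
    refine
    { toFun := fun a c => (a : MonoidAlgebra A G).coeff c.out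
      map_add' := fun a b => by ext c; rfl
      map_smul' := fun r a => by ext c; rfl
      invFun := fun φ =>
        ⟨MonoidAlgebra.ofCoeff (Finsupp.equivFunOnFinite.symm (fun g => φ (ConjClasses.mk g))), ?_⟩
      left_inv := ?_
      right_inv := ?_ }
    · rw [mem_ker_adMap_iff]
      intro g h
      have : ConjClasses.mk (g * h * g⁻¹) = ConjClasses.mk h := by
        rw [ConjClasses.mk_eq_mk_iff_isConj]
        exact (isConj_iff.mpr ⟨g, rfl⟩).symm
      simp [this, MonoidAlgebra.coeff_ofCoeff]
    · intro a
      apply Subtype.ext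
      apply MonoidAlgebra.ext; apply Finsupp.ext; intro g
      have hc : IsConj g (ConjClasses.mk g).out := by
        rw [← ConjClasses.mk_eq_mk_iff_isConj, hmkout]
      obtain ⟨c, hc⟩ := isConj_iff.mp hc
      have key := (mem_ker_adMap_iff A G a).mp a.2 c g
      rw [hc] at key
      simp [key, MonoidAlgebra.coeff_ofCoeff]
    · intro φ
      ext c
      simp [hmkout, MonoidAlgebra.coeff_ofCoeff]
  have : Fintype (ConjClasses G) := Fintype.ofFinite _
  rw [e.finrank_eq, Module.finrank_pi, Nat.card_eq_fintype_card]

/-- For a finite group `G` and a field `A`, the dimension of the space of inner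
derivations of `A[G]` is `|G| − |G^G|`, the order of `G` minus the number of conjugacy
classes of `G`. -/
theorem innDer_finrank
    (A G : Type) [Field A] [Group G] [Finite G] :
    Module.finrank A ↥(innDer A G) = Nat.card G - Nat.card (ConjClasses G) := by
  cases nonempty_fintype G
  have efin : MonoidAlgebra A G ≃ₗ[A] (G → A) := (MonoidAlgebra.coeffLinearEquiv A).trans (Finsupp.linearEquivFunOnFinite A A G)
  have : Module.Finite A (MonoidAlgebra A G) := Module.Finite.equiv efin.symm
  have h1 := LinearMap.finrank_range_add_finrank_ker (adMap A G)
  have h2 : Module.finrank A (MonoidAlgebra A G) = Nat.card G := by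
    rw [efin.finrank_eq, Module.finrank_pi, Nat.card_eq_fintype_card]
  have h3 : Nat.card (ConjClasses G) ≤ Nat.card G :=
    Nat.card_le_card_of_surjective ConjClasses.mk (Quot.mk_surjective)
  rw [finrank_ker_adMap A G, h2] at h1
  rw [innDer_eq_range]
  omega
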